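/- Let (X₁,ρ₁,μ₁) and (X₂,ρ₂,μ₂) be quasimetric spaces (quasitriangle constant A₀ ≥ 1) with upper doubling measures with dominating functions λᵢ and constants C_{λᵢ}; set tᵢ := log₂ C_{λᵢ}, fix αᵢ > 0 and γᵢ := αᵢ/(2(αᵢ + tᵢ)), constants C_Q ≥ 1, C_K ≥ 1, and 𝒞 := 2A₀C_QC_K. Let K be a measurable kernel on (X₁×X₂)×(X₁×X₂) satisfying the bi-parameter Hölder estimate with constant C_H in base-point form. For i = 1,2, let Qᵢ, Q'ᵢ ⊆ Xᵢ be measurable sets of finite positive measure with side lengths 0 < ℓᵢ ≤ ℓ'ᵢ such that ρᵢ(y,z) ≤ C_Qℓᵢ for all y, z ∈ Qᵢ, and such that Qᵢ and Q'ᵢ are separated: ρᵢ(Qᵢ,Q'ᵢ) > 𝒞 ℓᵢ^{γᵢ}(ℓ'ᵢ)^{1−γᵢ}. Let f_{Q₁}, f_{Q₂}, g_{Q'₁}, g_{Q'₂} be L² functions supported on Q₁, Q₂, Q'₁, Q'₂ respectively, each of L² norm 1, with ∫ f_{Q₁} dμ₁ = ∫ f_{Q₂} dμ₂ = 0, and assume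 the integrand below (and its base-point modifications) is absolutely integrable. Then |∬∬ K(x₁,x₂;y₁,y₂) f_{Q₁}(y₁) f_{Q₂}(y₂) g_{Q'₁}(x₁) g_{Q'₂}(x₂) dμ₂(x₂) dμ₁(x₁) dμ₂(y₂) dμ₁(y₁)| ≤ C' · A₁^{sep} · A₂^{sep}, where Aᵢ^{sep} := ℓᵢ^{αᵢ/2}(ℓ'ᵢ)^{αᵢ/2} μᵢ(Qᵢ)^{1/2} μᵢ(Q'ᵢ)^{1/2} / [ (ℓᵢ + ℓ'ᵢ + ρᵢ(Qᵢ,Q'ᵢ))^{αᵢ} · sup_{z∈Qᵢ} λᵢ(z, ρᵢ(Qᵢ,Q'ᵢ)) ], and C' depends only on A₀, C_Q, C_K, α₁, α₂, C_{λ₁}, C_{λ₂}, C_H. -/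

import Mathlib

open MeasureTheory

section SepSepAux

private lemma exp_mono_aux {ℓ ℓ' s γ : ℝ} (hℓ : 0 < ℓ) (hℓℓ' : ℓ ≤ ℓ') (hγs : γ ≤ s) :
    ℓ ^ s * ℓ' ^ (1 - s) ≤ ℓ ^ γ * ℓ' ^ (1 - γ) := by
  have hℓ' : 0 < ℓ' := lt_of_lt_of_le hℓ hℓℓ'
  have hq : 0 < ℓ / ℓ' := div_pos hℓ hℓ'
  have hq1 : ℓ / ℓ' ≤ 1 := (div_le_one hℓ').2 hℓℓ'
  have key : ∀ u : ℝ, ℓ ^ u * ℓ' ^ (1 - u) = (ℓ / ℓ') ^ u * ℓ' := by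
    intro u
    rw [Real.div_rpow hℓ.le hℓ'.le, Real.rpow_sub hℓ', Real.rpow_one]
    field_simp
  rw [key s, key γ]
  exact mul_le_mul_of_nonneg_right (Real.rpow_le_rpow_of_exponent_ge hq hq1 hγs) hℓ'.le

private lemma gamma_bounds {α t ℓ ℓ' : ℝ} (hα : 0 < α) (ht : 0 ≤ t) (hℓ : 0 < ℓ)
    (hℓℓ' : ℓ ≤ ℓ') :
    ℓ ≤ ℓ ^ (α / (2 * (α + t))) * ℓ' ^ (1 - α / (2 * (α + t))) ∧
      ℓ ^ ((1:ℝ)/2) * ℓ' ^ ((1:ℝ)/2) ≤ ℓ ^ (α / (2 * (α + t))) * ℓ' ^ (1 - α / (2 * (α + t))) := by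
  have hℓ' : 0 < ℓ' := lt_of_lt_of_le hℓ hℓℓ'
  set γ := α / (2 * (α + t)) with hγdef
  have hden : 0 < 2 * (α + t) := by linarith
  have hγ0 : 0 < γ := div_pos hα hden
  have hγhalf : γ ≤ 1 / 2 := by
    rw [hγdef, div_le_div_iff₀ hden (by norm_num)]
    linarith
  constructor
  · calc ℓ = ℓ ^ (γ + (1 - γ)) := by rw [show γ + (1 - γ) = 1 by ring, Real.rpow_one]
      _ = ℓ ^ γ * ℓ ^ (1 - γ) := Real.rpow_add hℓ _ _
      _ ≤ ℓ ^ γ * ℓ' ^ (1 - γ) := mul_le_mul_of_nonneg_left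
          (Real.rpow_le_rpow hℓ.le hℓℓ' (by linarith : (0:ℝ) ≤ 1 - γ)) (Real.rpow_nonneg hℓ.le γ)
  · have h := exp_mono_aux hℓ hℓℓ' hγhalf
    have h12 : (1:ℝ) - 1/2 = 1/2 := by norm_num
    rw [h12] at h
    exact h

private lemma scalar_bound {C_Q α ℓ ℓ' d ρ r L S : ℝ}
    (hC_Q : 1 ≤ C_Q) (hα : 0 < α) (hℓ : 0 < ℓ) (hℓℓ' : ℓ ≤ ℓ')
    (hr0 : 0 ≤ r) (hr : r ≤ C_Q * ℓ)
    (hd : ℓ ^ ((1:ℝ)/2) * ℓ' ^ ((1:ℝ)/2) ≤ d) (hd0 : 0 < d) (hdρ : d ≤ ρ)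
    (hL : 0 < L) (hS : 0 < S) (hSL : S ≤ 2 * L) :
    r ^ α / (ρ ^ α * L) ≤ (4 * (4 * C_Q) ^ α) * (ℓ ^ (α/2) * ℓ' ^ (α/2) / ((ℓ + ℓ' + d) ^ α * S)) := by
  have hℓ' : 0 < ℓ' := lt_of_lt_of_le hℓ hℓℓ'
  have hρ : 0 < ρ := lt_of_lt_of_le hd0 hdρ
  set N := ℓ ^ (α/2) * ℓ' ^ (α/2) with hN
  have hN0 : 0 ≤ N := mul_nonneg (Real.rpow_nonneg hℓ.le _) (Real.rpow_nonneg hℓ'.le _)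
  have key1 : r ^ α ≤ C_Q ^ α * ℓ ^ α := by
    rw [← Real.mul_rpow (by linarith) hℓ.le]
    exact Real.rpow_le_rpow hr0 hr hα.le
  have hhalf : ∀ x : ℝ, 0 < x → x ^ (α/2) = (x ^ ((1:ℝ)/2)) ^ α := by
    intro x hx
    rw [← Real.rpow_mul hx.le]
    congr 1; ring
  have key2 : N ≤ d ^ α := by
    rw [hN, hhalf ℓ hℓ, hhalf ℓ' hℓ',
      ← Real.mul_rpow (Real.rpow_nonneg hℓ.le _) (Real.rpow_nonneg hℓ'.le _)]
    exact Real.rpow_le_rpow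
      (mul_nonneg (Real.rpow_nonneg hℓ.le _) (Real.rpow_nonneg hℓ'.le _)) hd hα.le
  have key3 : (ℓ + ℓ' + d) ^ α ≤ 4 ^ α * (ℓ' ^ α + d ^ α) := by
    have hm : ℓ + ℓ' + d ≤ 4 * max ℓ' d := by
      have h1 := le_max_left ℓ' d
      have h2 := le_max_right ℓ' d
      linarith
    have hmax0 : 0 ≤ max ℓ' d := le_trans hℓ'.le (le_max_left _ _)
    calc (ℓ + ℓ' + d) ^ α ≤ (4 * max ℓ' d) ^ α :=
          Real.rpow_le_rpow (by linarith) hm hα.le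
      _ = 4 ^ α * (max ℓ' d) ^ α := Real.mul_rpow (by norm_num) hmax0
      _ ≤ 4 ^ α * (ℓ' ^ α + d ^ α) := by
          apply mul_le_mul_of_nonneg_left _ (Real.rpow_nonneg (by norm_num) α)
          rcases max_cases ℓ' d with ⟨h, _⟩ | ⟨h, _⟩ <;> rw [h]
          · nlinarith [Real.rpow_nonneg hd0.le α]
          · nlinarith [Real.rpow_nonneg hℓ'.le α]
  have hℓα : ℓ ^ α ≤ N := by
    have h1 : ℓ ^ α = ℓ ^ (α/2) * ℓ ^ (α/2) := by
      rw [← Real.rpow_add hℓ]; ring_nf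
    rw [h1, hN]
    exact mul_le_mul_of_nonneg_left
      (Real.rpow_le_rpow hℓ.le hℓℓ' (by linarith)) (Real.rpow_nonneg hℓ.le _)
  have hNN : ℓ ^ α * ℓ' ^ α = N * N := by
    rw [hN, show α = α/2 + α/2 by ring, Real.rpow_add hℓ, Real.rpow_add hℓ']
    ring
  have hdρα : d ^ α ≤ ρ ^ α := Real.rpow_le_rpow hd0.le hdρ hα.le
  have hden1 : 0 < ρ ^ α * L := mul_pos (Real.rpow_pos_of_pos hρ α) hL
  have hden2 : 0 < (ℓ + ℓ' + d) ^ α * S :=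
    mul_pos (Real.rpow_pos_of_pos (by linarith) α) hS
  rw [mul_div_assoc'] at *
  rw [div_le_div_iff₀ hden1 hden2]
  have hd0α : 0 ≤ d ^ α := Real.rpow_nonneg hd0.le α
  calc r ^ α * ((ℓ + ℓ' + d) ^ α * S)
      ≤ (C_Q ^ α * ℓ ^ α) * ((4 ^ α * (ℓ' ^ α + d ^ α)) * (2 * L)) := by
        apply mul_le_mul key1 _ _ (by positivity)
        · apply mul_le_mul key3 hSL hS.le (by positivity)
        · positivity
    _ = (2 * 4 ^ α * C_Q ^ α * L) * (ℓ ^ α * ℓ' ^ α + ℓ ^ α * d ^ α) := by ring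
    _ ≤ (2 * 4 ^ α * C_Q ^ α * L) * (N * d ^ α + N * d ^ α) := by
        apply mul_le_mul_of_nonneg_left _ (by positivity)
        apply add_le_add
        · rw [hNN]; exact mul_le_mul_of_nonneg_left key2 hN0
        · exact mul_le_mul_of_nonneg_right hℓα hd0α
    _ = (4 * (4 ^ α * C_Q ^ α)) * N * (d ^ α * L) := by ring
    _ ≤ (4 * (4 ^ α * C_Q ^ α)) * N * (ρ ^ α * L) := by
        apply mul_le_mul_of_nonneg_left (mul_le_mul_of_nonneg_right hdρα hL.le)
        positivity
    _ = 4 * (4 * C_Q) ^ α * N * (ρ ^ α * L) := by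
        rw [Real.mul_rpow (by norm_num) (by linarith)]

private lemma fubini4 {A B C D : Type} [MeasurableSpace A] [MeasurableSpace B]
    [MeasurableSpace C] [MeasurableSpace D]
    (μa : Measure A) (μb : Measure B) (μc : Measure C) (μd : Measure D)
    [SFinite μa] [SFinite μb] [SFinite μc] [SFinite μd]
    (G : (A × B) × (C × D) → ℂ)
    (hG : Integrable G ((μa.prod μb).prod (μc.prod μd))) :
    ∫ y₁, ∫ y₂, ∫ x₁, ∫ x₂, G ((y₁, y₂), (x₁, x₂)) ∂μd ∂μc ∂μb ∂μa
      = ∫ q, G q ∂((μa.prod μb).prod (μc.prod μd)) := by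
  have h1 : ∫ q, G q ∂((μa.prod μb).prod (μc.prod μd))
      = ∫ y, (∫ x, G (y, x) ∂(μc.prod μd)) ∂(μa.prod μb) := integral_prod G hG
  have h2 : ∫ y, (∫ x, G (y, x) ∂(μc.prod μd)) ∂(μa.prod μb)
      = ∫ y₁, ∫ y₂, (∫ x, G ((y₁, y₂), x) ∂(μc.prod μd)) ∂μb ∂μa :=
    integral_prod _ hG.integral_prod_left
  have h3 : ∀ᵐ y ∂(μa.prod μb),
      (∫ x, G (y, x) ∂(μc.prod μd)) = ∫ x₁, ∫ x₂, G (y, (x₁, x₂)) ∂μd ∂μc := by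
    filter_upwards [hG.prod_right_ae] with y hy
    exact integral_prod _ hy
  have h4 : ∀ᵐ y₁ ∂μa, ∀ᵐ y₂ ∂μb,
      (∫ x, G ((y₁, y₂), x) ∂(μc.prod μd)) = ∫ x₁, ∫ x₂, G ((y₁, y₂), (x₁, x₂)) ∂μd ∂μc :=
    Measure.ae_ae_of_ae_prod h3
  have h5 : ∫ y₁, ∫ y₂, (∫ x, G ((y₁, y₂), x) ∂(μc.prod μd)) ∂μb ∂μa
      = ∫ y₁, ∫ y₂, ∫ x₁, ∫ x₂, G ((y₁, y₂), (x₁, x₂)) ∂μd ∂μc ∂μb ∂μa := by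
    apply integral_congr_ae
    filter_upwards [h4] with y₁ hy₁
    exact integral_congr_ae hy₁
  rw [h1, h2, h5]

private lemma l1_bound {X : Type} [MeasurableSpace X] {μ : Measure X} {f : X → ℂ} {Q : Set X}
    (hQ : MeasurableSet Q) (hfin : μ Q < ⊤) (hsupp : Function.support f ⊆ Q)
    (hmem : MemLp f 2 μ) (hnorm : eLpNorm f 2 μ = 1) :
    Integrable f μ ∧ ∫ x, ‖f x‖ ∂μ ≤ (μ Q).toReal ^ ((1:ℝ)/2) := by
  have hind : Q.indicator f = f := Set.indicator_eq_self.2 hsupp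
  haveI : IsFiniteMeasure (μ.restrict Q) := ⟨by rwa [Measure.restrict_apply_univ]⟩
  have hrest2 : MemLp f 2 (μ.restrict Q) := hmem.restrict Q
  have hrest1 : MemLp f 1 (μ.restrict Q) := hrest2.mono_exponent (by norm_num)
  have hint_r : Integrable f (μ.restrict Q) := memLp_one_iff_integrable.1 hrest1
  have hint : Integrable f μ := by
    have h := (integrable_indicator_iff hQ).2 hint_r
    rwa [hind] at h
  refine ⟨hint, ?_⟩
  have h2 : eLpNorm f 2 (μ.restrict Q) = 1 := by
    rw [← eLpNorm_indicator_eq_eLpNorm_restrict hQ, hind]; exact hnorm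
  have h1 : eLpNorm f 1 (μ.restrict Q)
      ≤ eLpNorm f 2 (μ.restrict Q) * (μ.restrict Q) Set.univ ^ ((1:ℝ)/(1:ENNReal).toReal - 1/(2:ENNReal).toReal) :=
    eLpNorm_le_eLpNorm_mul_rpow_measure_univ (by norm_num) hrest2.aestronglyMeasurable
  rw [h2, one_mul, Measure.restrict_apply_univ] at h1
  have hexp : (1:ℝ)/(1:ENNReal).toReal - 1/(2:ENNReal).toReal = (1:ℝ)/2 := by
    norm_num
  rw [hexp] at h1
  have hIeq : ∫ x, ‖f x‖ ∂μ = ∫ x in Q, ‖f x‖ ∂μ := by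
    refine (setIntegral_eq_integral_of_forall_compl_eq_zero (fun x hx => ?_)).symm
    have hfx : f x = 0 := by
      by_contra h
      exact hx (hsupp (Function.mem_support.2 h))
    rw [hfx]; simp
  have hIle : ∫ x in Q, ‖f x‖ ∂μ = (eLpNorm f 1 (μ.restrict Q)).toReal := by
    rw [integral_norm_eq_lintegral_enorm hint_r.aestronglyMeasurable,
      eLpNorm_one_eq_lintegral_enorm]
  rw [hIeq, hIle]
  have hfin' : (μ Q) ^ ((1:ℝ)/2) ≠ ⊤ :=
    (ENNReal.rpow_lt_top_of_nonneg (by norm_num) hfin.ne).ne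
  calc (eLpNorm f 1 (μ.restrict Q)).toReal ≤ ((μ Q) ^ ((1:ℝ)/2)).toReal :=
        ENNReal.toReal_mono hfin' h1
    _ = (μ Q).toReal ^ ((1:ℝ)/2) := (ENNReal.toReal_rpow _ _).symm

end SepSepAux

set_option maxHeartbeats 2000000 in
/-- the Separated/Separated matrix-element estimate
(Lemma 5.1 of the paper). -/
theorem separated_separated_estimate
    (A₀ C_Q C_K α₁ α₂ Clam₁ Clam₂ C_H : ℝ)
    (hA₀ : 1 ≤ A₀) (hC_Q : 1 ≤ C_Q) (hC_K : 1 ≤ C_K)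
    (hα₁ : 0 < α₁) (hα₂ : 0 < α₂)
    (hClam₁ : 1 ≤ Clam₁) (hClam₂ : 1 ≤ Clam₂) (hC_H : 0 ≤ C_H) :
    ∃ C' : ℝ, 0 < C' ∧
      ∀ (X₁ X₂ : Type) [MeasurableSpace X₁] [MeasurableSpace X₂]
        (ρ₁ : X₁ → X₁ → ℝ) (ρ₂ : X₂ → X₂ → ℝ)
        (μ₁ : Measure X₁) (μ₂ : Measure X₂)
        (lam₁ : X₁ → ℝ → ℝ) (lam₂ : X₂ → ℝ → ℝ)
        (K : X₁ × X₂ → X₁ × X₂ → ℂ)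
        (Q₁ Q₁' : Set X₁) (Q₂ Q₂' : Set X₂)
        (ℓ₁ ℓ₁' ℓ₂ ℓ₂' d₁ d₂ S₁ S₂ : ℝ)
        (f₁ g₁ : X₁ → ℂ) (f₂ g₂ : X₂ → ℂ),
        (∀ x y, 0 ≤ ρ₁ x y) → (∀ x y, ρ₁ x y = 0 ↔ x = y) →
        (∀ x y, ρ₁ x y = ρ₁ y x) → (∀ x y z, ρ₁ x z ≤ A₀ * (ρ₁ x y + ρ₁ y z)) →
        (∀ x y, 0 ≤ ρ₂ x y) → (∀ x y, ρ₂ x y = 0 ↔ x = y) →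
        (∀ x y, ρ₂ x y = ρ₂ y x) → (∀ x y z, ρ₂ x z ≤ A₀ * (ρ₂ x y + ρ₂ y z)) →
        (∀ x r, 0 < r → 0 < lam₁ x r) →
        (∀ x r s, 0 < r → r ≤ s → lam₁ x r ≤ lam₁ x s) →
        (∀ x r, 0 < r → lam₁ x (2 * r) ≤ Clam₁ * lam₁ x r) →
        (∀ x r, 0 < r → μ₁ {y | ρ₁ x y < r} ≤ ENNReal.ofReal (lam₁ x r)) →
        (∀ x r, 0 < r → 0 < lam₂ x r) →
        (∀ x r s, 0 < r → r ≤ s → lam₂ x r ≤ lam₂ x s) →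
        (∀ x r, 0 < r → lam₂ x (2 * r) ≤ Clam₂ * lam₂ x r) →
        (∀ x r, 0 < r → μ₂ {y | ρ₂ x y < r} ≤ ENNReal.ofReal (lam₂ x r)) →
        (∀ x₁ x₂ y₁ y₂ z w,
          ρ₁ y₁ z ≤ ρ₁ x₁ z / C_K → ρ₂ y₂ w ≤ ρ₂ x₂ w / C_K →
          ‖K (x₁, x₂) (y₁, y₂) - K (x₁, x₂) (y₁, w) - K (x₁, x₂) (z, y₂) + K (x₁, x₂) (z, w)‖
            ≤ C_H * (ρ₁ y₁ z ^ α₁ / (ρ₁ x₁ z ^ α₁ * lam₁ z (ρ₁ x₁ z)))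
                * (ρ₂ y₂ w ^ α₂ / (ρ₂ x₂ w ^ α₂ * lam₂ w (ρ₂ x₂ w)))) →
        MeasurableSet Q₁ → MeasurableSet Q₁' → MeasurableSet Q₂ → MeasurableSet Q₂' →
        0 < μ₁ Q₁ → μ₁ Q₁ < ⊤ → 0 < μ₁ Q₁' → μ₁ Q₁' < ⊤ →
        0 < μ₂ Q₂ → μ₂ Q₂ < ⊤ → 0 < μ₂ Q₂' → μ₂ Q₂' < ⊤ →
        0 < ℓ₁ → ℓ₁ ≤ ℓ₁' → 0 < ℓ₂ → ℓ₂ ≤ ℓ₂' →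
        (∀ y ∈ Q₁, ∀ z ∈ Q₁, ρ₁ y z ≤ C_Q * ℓ₁) →
        (∀ y ∈ Q₂, ∀ z ∈ Q₂, ρ₂ y z ≤ C_Q * ℓ₂) →
        IsGLB ((fun p : X₁ × X₁ => ρ₁ p.1 p.2) '' Q₁ ×ˢ Q₁') d₁ →
        IsGLB ((fun p : X₂ × X₂ => ρ₂ p.1 p.2) '' Q₂ ×ˢ Q₂') d₂ →
        2 * A₀ * C_Q * C_K * ℓ₁ ^ (α₁ / (2 * (α₁ + Real.logb 2 Clam₁)))
            * ℓ₁' ^ (1 - α₁ / (2 * (α₁ + Real.logb 2 Clam₁))) < d₁ →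
        2 * A₀ * C_Q * C_K * ℓ₂ ^ (α₂ / (2 * (α₂ + Real.logb 2 Clam₂)))
            * ℓ₂' ^ (1 - α₂ / (2 * (α₂ + Real.logb 2 Clam₂))) < d₂ →
        IsLUB ((fun z => lam₁ z d₁) '' Q₁) S₁ →
        IsLUB ((fun w => lam₂ w d₂) '' Q₂) S₂ →
        Function.support f₁ ⊆ Q₁ → Function.support g₁ ⊆ Q₁' →
        Function.support f₂ ⊆ Q₂ → Function.support g₂ ⊆ Q₂' →
        MemLp f₁ 2 μ₁ → MemLp g₁ 2 μ₁ → MemLp f₂ 2 μ₂ → MemLp g₂ 2 μ₂ →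
        eLpNorm f₁ 2 μ₁ = 1 → eLpNorm g₁ 2 μ₁ = 1 →
        eLpNorm f₂ 2 μ₂ = 1 → eLpNorm g₂ 2 μ₂ = 1 →
        (∫ y, f₁ y ∂μ₁) = 0 → (∫ y, f₂ y ∂μ₂) = 0 →
        Integrable (fun q : (X₁ × X₂) × (X₁ × X₂) =>
            K q.2 q.1 * f₁ q.1.1 * f₂ q.1.2 * g₁ q.2.1 * g₂ q.2.2)
          ((μ₁.prod μ₂).prod (μ₁.prod μ₂)) →
        (∀ z ∈ Q₁, Integrable (fun q : (X₁ × X₂) × (X₁ × X₂) =>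
            K q.2 (z, q.1.2) * f₁ q.1.1 * f₂ q.1.2 * g₁ q.2.1 * g₂ q.2.2)
          ((μ₁.prod μ₂).prod (μ₁.prod μ₂))) →
        (∀ w ∈ Q₂, Integrable (fun q : (X₁ × X₂) × (X₁ × X₂) =>
            K q.2 (q.1.1, w) * f₁ q.1.1 * f₂ q.1.2 * g₁ q.2.1 * g₂ q.2.2)
          ((μ₁.prod μ₂).prod (μ₁.prod μ₂))) →
        (∀ z ∈ Q₁, ∀ w ∈ Q₂, Integrable (fun q : (X₁ × X₂) × (X₁ × X₂) =>
            K q.2 (z, w) * f₁ q.1.1 * f₂ q.1.2 * g₁ q.2.1 * g₂ q.2.2)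
          ((μ₁.prod μ₂).prod (μ₁.prod μ₂))) →
        ‖∫ y₁, (∫ y₂, (∫ x₁, (∫ x₂,
            K (x₁, x₂) (y₁, y₂) * f₁ y₁ * f₂ y₂ * g₁ x₁ * g₂ x₂ ∂μ₂) ∂μ₁) ∂μ₂) ∂μ₁‖
          ≤ C' * (ℓ₁ ^ (α₁ / 2) * ℓ₁' ^ (α₁ / 2) * (μ₁ Q₁).toReal ^ ((1 : ℝ) / 2)
                    * (μ₁ Q₁').toReal ^ ((1 : ℝ) / 2) / ((ℓ₁ + ℓ₁' + d₁) ^ α₁ * S₁))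
              * (ℓ₂ ^ (α₂ / 2) * ℓ₂' ^ (α₂ / 2) * (μ₂ Q₂).toReal ^ ((1 : ℝ) / 2)
                    * (μ₂ Q₂').toReal ^ ((1 : ℝ) / 2) / ((ℓ₂ + ℓ₂' + d₂) ^ α₂ * S₂)) := by
  have hA₀0 : (0:ℝ) < A₀ := by linarith
  have hC_Q0 : (0:ℝ) < C_Q := by linarith
  have hC_K0 : (0:ℝ) < C_K := by linarith
  have hc₁pos : (0:ℝ) < 4 * (4 * C_Q) ^ α₁ := by positivity
  have hc₂pos : (0:ℝ) < 4 * (4 * C_Q) ^ α₂ := by positivity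
  refine ⟨(C_H + 1) * (4 * (4 * C_Q) ^ α₁) * (4 * (4 * C_Q) ^ α₂), by positivity, ?_⟩
  intro X₁ X₂ _ _ ρ₁ ρ₂ μ₁ μ₂ lam₁ lam₂ K Q₁ Q₁' Q₂ Q₂' ℓ₁ ℓ₁' ℓ₂ ℓ₂' d₁ d₂ S₁ S₂ f₁ g₁ f₂ g₂
  intro hρ₁0 hρ₁eq hρ₁symm hρ₁tri hρ₂0 hρ₂eq hρ₂symm hρ₂tri
  intro hlam₁pos hlam₁mono hlam₁dbl hμ₁ball hlam₂pos hlam₂mono hlam₂dbl hμ₂ball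
  intro hK
  intro hQ₁m hQ₁'m hQ₂m hQ₂'m
  intro hμQ₁ hμQ₁top hμQ₁' hμQ₁'top hμQ₂ hμQ₂top hμQ₂' hμQ₂'top
  intro hℓ₁ hℓ₁₁' hℓ₂ hℓ₂₂'
  intro hdiam₁ hdiam₂ hglb₁ hglb₂ hsep₁ hsep₂ hlub₁ hlub₂
  intro hsf₁ hsg₁ hsf₂ hsg₂ hm_f₁ hm_g₁ hm_f₂ hm_g₂ hn_f₁ hn_g₁ hn_f₂ hn_g₂ hzero₁ hzero₂
  intro hIa hintz hintw hintzw
  -- nonemptiness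
  have hQ₁ne : Q₁.Nonempty := by
    rcases Set.eq_empty_or_nonempty Q₁ with h | h
    · rw [h] at hμQ₁; simp at hμQ₁
    · exact h
  have hQ₂ne : Q₂.Nonempty := by
    rcases Set.eq_empty_or_nonempty Q₂ with h | h
    · rw [h] at hμQ₂; simp at hμQ₂
    · exact h
  -- sigma-finiteness
  haveI hσ₁ : SigmaFinite μ₁ := by
    obtain ⟨x₀, -⟩ := hQ₁ne
    apply Measure.sigmaFinite_of_countable
      (Set.countable_range fun n : ℕ => MeasureTheory.toMeasurable μ₁ {y | ρ₁ x₀ y < n + 1})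
    · rintro s ⟨n, rfl⟩
      rw [measure_toMeasurable]
      exact lt_of_le_of_lt (hμ₁ball x₀ (n + 1) (by positivity)) ENNReal.ofReal_lt_top
    · rw [Set.sUnion_range]
      apply Set.eq_univ_iff_forall.2
      intro y
      obtain ⟨n, hn⟩ := exists_nat_gt (ρ₁ x₀ y)
      exact Set.mem_iUnion.2 ⟨n, subset_toMeasurable _ _ (by simp only [Set.mem_setOf_eq]; linarith)⟩
  haveI hσ₂ : SigmaFinite μ₂ := by
    obtain ⟨x₀, -⟩ := hQ₂ne
    apply Measure.sigmaFinite_of_countable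
      (Set.countable_range fun n : ℕ => MeasureTheory.toMeasurable μ₂ {y | ρ₂ x₀ y < n + 1})
    · rintro s ⟨n, rfl⟩
      rw [measure_toMeasurable]
      exact lt_of_le_of_lt (hμ₂ball x₀ (n + 1) (by positivity)) ENNReal.ofReal_lt_top
    · rw [Set.sUnion_range]
      apply Set.eq_univ_iff_forall.2
      intro y
      obtain ⟨n, hn⟩ := exists_nat_gt (ρ₂ x₀ y)
      exact Set.mem_iUnion.2 ⟨n, subset_toMeasurable _ _ (by simp only [Set.mem_setOf_eq]; linarith)⟩
  -- geometry
  have hℓ₁' : 0 < ℓ₁' := lt_of_lt_of_le hℓ₁ hℓ₁₁'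
  have hℓ₂' : 0 < ℓ₂' := lt_of_lt_of_le hℓ₂ hℓ₂₂'
  obtain ⟨hP1₁, hP2₁⟩ := gamma_bounds hα₁ (Real.logb_nonneg one_lt_two hClam₁) hℓ₁ hℓ₁₁'
  obtain ⟨hP1₂, hP2₂⟩ := gamma_bounds hα₂ (Real.logb_nonneg one_lt_two hClam₂) hℓ₂ hℓ₂₂'
  have e1 : (1:ℝ) ≤ A₀ * C_Q := by linarith [mul_le_mul hA₀ hC_Q zero_le_one hA₀0.le]
  have e2 : (1:ℝ) ≤ A₀ * C_Q * C_K := by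
    linarith [mul_le_mul e1 hC_K zero_le_one (by linarith : (0:ℝ) ≤ A₀ * C_Q)]
  have h2A1 : (1:ℝ) ≤ 2 * A₀ * C_Q * C_K := by linarith
  have hPpos₁ : 0 < ℓ₁ ^ (α₁ / (2 * (α₁ + Real.logb 2 Clam₁)))
      * ℓ₁' ^ (1 - α₁ / (2 * (α₁ + Real.logb 2 Clam₁))) :=
    mul_pos (Real.rpow_pos_of_pos hℓ₁ _) (Real.rpow_pos_of_pos hℓ₁' _)
  have hPpos₂ : 0 < ℓ₂ ^ (α₂ / (2 * (α₂ + Real.logb 2 Clam₂)))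
      * ℓ₂' ^ (1 - α₂ / (2 * (α₂ + Real.logb 2 Clam₂))) :=
    mul_pos (Real.rpow_pos_of_pos hℓ₂ _) (Real.rpow_pos_of_pos hℓ₂' _)
  have hcoef0 : (0:ℝ) < 2 * A₀ * C_Q * C_K := by linarith
  have hd₁pos : 0 < d₁ := by
    have h := mul_pos hcoef0 hPpos₁
    linarith [hsep₁]
  have hd₂pos : 0 < d₂ := by
    have h := mul_pos hcoef0 hPpos₂
    linarith [hsep₂]
  have hd₁sq : ℓ₁ ^ ((1:ℝ)/2) * ℓ₁' ^ ((1:ℝ)/2) ≤ d₁ := by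
    have h := mul_le_mul_of_nonneg_right h2A1 hPpos₁.le
    linarith [hsep₁, hP2₁]
  have hd₂sq : ℓ₂ ^ ((1:ℝ)/2) * ℓ₂' ^ ((1:ℝ)/2) ≤ d₂ := by
    have h := mul_le_mul_of_nonneg_right h2A1 hPpos₂.le
    linarith [hsep₂, hP2₂]
  have hCKQ : C_K * C_Q ≤ 2 * A₀ * C_Q * C_K := by
    have h := mul_nonneg (by linarith : (0:ℝ) ≤ 2 * A₀ - 1) (mul_pos hC_Q0 hC_K0).le
    linarith
  have hd₁CK : C_K * (C_Q * ℓ₁) ≤ d₁ := by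
    have ha := mul_le_mul_of_nonneg_left hP1₁ (mul_pos hC_K0 hC_Q0).le
    have hb := mul_le_mul_of_nonneg_right hCKQ hPpos₁.le
    linarith [hsep₁]
  have hd₂CK : C_K * (C_Q * ℓ₂) ≤ d₂ := by
    have ha := mul_le_mul_of_nonneg_left hP1₂ (mul_pos hC_K0 hC_Q0).le
    have hb := mul_le_mul_of_nonneg_right hCKQ hPpos₂.le
    linarith [hsep₂]
  -- glb facts
  have hd₁le : ∀ z ∈ Q₁, ∀ x ∈ Q₁', d₁ ≤ ρ₁ x z := by
    intro z hz x hx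
    have h := hglb₁.1 ⟨(z, x), Set.mk_mem_prod hz hx, rfl⟩
    rw [hρ₁symm]
    exact h
  have hd₂le : ∀ w ∈ Q₂, ∀ x ∈ Q₂', d₂ ≤ ρ₂ x w := by
    intro w hw x hx
    have h := hglb₂.1 ⟨(w, x), Set.mk_mem_prod hw hx, rfl⟩
    rw [hρ₂symm]
    exact h
  -- lub facts : positivity of S and choice of base points
  have hS₁pos : 0 < S₁ := by
    obtain ⟨x₀, hx₀⟩ := hQ₁ne
    exact lt_of_lt_of_le (hlam₁pos x₀ d₁ hd₁pos) (hlub₁.1 (Set.mem_image_of_mem _ hx₀))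
  have hS₂pos : 0 < S₂ := by
    obtain ⟨x₀, hx₀⟩ := hQ₂ne
    exact lt_of_lt_of_le (hlam₂pos x₀ d₂ hd₂pos) (hlub₂.1 (Set.mem_image_of_mem _ hx₀))
  obtain ⟨z, hzQ, hSz⟩ : ∃ z ∈ Q₁, S₁ ≤ 2 * lam₁ z d₁ := by
    obtain ⟨c, ⟨z, hz, rfl⟩, hc, -⟩ := hlub₁.exists_between (by linarith : S₁ / 2 < S₁)
    exact ⟨z, hz, by linarith⟩
  obtain ⟨w, hwQ, hSw⟩ : ∃ w ∈ Q₂, S₂ ≤ 2 * lam₂ w d₂ := by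
    obtain ⟨c, ⟨w, hw, rfl⟩, hc, -⟩ := hlub₂.exists_between (by linarith : S₂ / 2 < S₂)
    exact ⟨w, hw, by linarith⟩
  -- kernel factor bounds
  set M₁ : ℝ := 4 * (4 * C_Q) ^ α₁ * (ℓ₁ ^ (α₁/2) * ℓ₁' ^ (α₁/2) / ((ℓ₁ + ℓ₁' + d₁) ^ α₁ * S₁))
    with hM₁def
  set M₂ : ℝ := 4 * (4 * C_Q) ^ α₂ * (ℓ₂ ^ (α₂/2) * ℓ₂' ^ (α₂/2) / ((ℓ₂ + ℓ₂' + d₂) ^ α₂ * S₂))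
    with hM₂def
  have hM₁nn : 0 ≤ M₁ := by
    rw [hM₁def]
    have h1 : (0:ℝ) < (ℓ₁ + ℓ₁' + d₁) ^ α₁ * S₁ :=
      mul_pos (Real.rpow_pos_of_pos (by linarith) _) hS₁pos
    positivity
  have hM₂nn : 0 ≤ M₂ := by
    rw [hM₂def]
    have h1 : (0:ℝ) < (ℓ₂ + ℓ₂' + d₂) ^ α₂ * S₂ :=
      mul_pos (Real.rpow_pos_of_pos (by linarith) _) hS₂pos
    positivity
  have hfac₁ : ∀ y₁ ∈ Q₁, ∀ x₁ ∈ Q₁',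
      ρ₁ y₁ z ^ α₁ / (ρ₁ x₁ z ^ α₁ * lam₁ z (ρ₁ x₁ z)) ≤ M₁ := by
    intro y₁ hy₁ x₁ hx₁
    have hdρ : d₁ ≤ ρ₁ x₁ z := hd₁le z hzQ x₁ hx₁
    have hρpos : 0 < ρ₁ x₁ z := hd₁pos.trans_le hdρ
    have hLpos : 0 < lam₁ z (ρ₁ x₁ z) := hlam₁pos _ _ hρpos
    have hLmono : lam₁ z d₁ ≤ lam₁ z (ρ₁ x₁ z) := hlam₁mono z d₁ _ hd₁pos hdρ
    rw [hM₁def]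
    exact scalar_bound hC_Q hα₁ hℓ₁ hℓ₁₁' (hρ₁0 _ _) (hdiam₁ y₁ hy₁ z hzQ) hd₁sq hd₁pos hdρ
      hLpos hS₁pos (by linarith)
  have hfac₂ : ∀ y₂ ∈ Q₂, ∀ x₂ ∈ Q₂',
      ρ₂ y₂ w ^ α₂ / (ρ₂ x₂ w ^ α₂ * lam₂ w (ρ₂ x₂ w)) ≤ M₂ := by
    intro y₂ hy₂ x₂ hx₂
    have hdρ : d₂ ≤ ρ₂ x₂ w := hd₂le w hwQ x₂ hx₂
    have hρpos : 0 < ρ₂ x₂ w := hd₂pos.trans_le hdρ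
    have hLpos : 0 < lam₂ w (ρ₂ x₂ w) := hlam₂pos _ _ hρpos
    have hLmono : lam₂ w d₂ ≤ lam₂ w (ρ₂ x₂ w) := hlam₂mono w d₂ _ hd₂pos hdρ
    rw [hM₂def]
    exact scalar_bound hC_Q hα₂ hℓ₂ hℓ₂₂' (hρ₂0 _ _) (hdiam₂ y₂ hy₂ w hwQ) hd₂sq hd₂pos hdρ
      hLpos hS₂pos (by linarith)
  -- Hoelder applicability
  have hcond₁ : ∀ y₁ ∈ Q₁, ∀ x₁ ∈ Q₁', ρ₁ y₁ z ≤ ρ₁ x₁ z / C_K := by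
    intro y₁ hy₁ x₁ hx₁
    rw [le_div_iff₀ hC_K0]
    calc ρ₁ y₁ z * C_K ≤ (C_Q * ℓ₁) * C_K :=
          mul_le_mul_of_nonneg_right (hdiam₁ y₁ hy₁ z hzQ) hC_K0.le
      _ = C_K * (C_Q * ℓ₁) := by ring
      _ ≤ d₁ := hd₁CK
      _ ≤ ρ₁ x₁ z := hd₁le z hzQ x₁ hx₁
  have hcond₂ : ∀ y₂ ∈ Q₂, ∀ x₂ ∈ Q₂', ρ₂ y₂ w ≤ ρ₂ x₂ w / C_K := by
    intro y₂ hy₂ x₂ hx₂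
    rw [le_div_iff₀ hC_K0]
    calc ρ₂ y₂ w * C_K ≤ (C_Q * ℓ₂) * C_K :=
          mul_le_mul_of_nonneg_right (hdiam₂ y₂ hy₂ w hwQ) hC_K0.le
      _ = C_K * (C_Q * ℓ₂) := by ring
      _ ≤ d₂ := hd₂CK
      _ ≤ ρ₂ x₂ w := hd₂le w hwQ x₂ hx₂
  -- pointwise bound on the difference integrand
  have hDbound : ∀ (y₁ : X₁) (y₂ : X₂) (x₁ : X₁) (x₂ : X₂),
      ‖(K (x₁, x₂) (y₁, y₂) - K (x₁, x₂) (y₁, w) - K (x₁, x₂) (z, y₂) + K (x₁, x₂) (z, w))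
          * f₁ y₁ * f₂ y₂ * g₁ x₁ * g₂ x₂‖
        ≤ (C_H * M₁ * M₂) * ((‖f₁ y₁‖ * ‖f₂ y₂‖) * (‖g₁ x₁‖ * ‖g₂ x₂‖)) := by
    intro y₁ y₂ x₁ x₂
    by_cases h1 : f₁ y₁ = 0
    · simp [h1]
    by_cases h2 : f₂ y₂ = 0
    · simp [h2]
    by_cases h3 : g₁ x₁ = 0
    · simp [h3]
    by_cases h4 : g₂ x₂ = 0
    · simp [h4]
    have hy₁ : y₁ ∈ Q₁ := hsf₁ (Function.mem_support.2 h1)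
    have hy₂ : y₂ ∈ Q₂ := hsf₂ (Function.mem_support.2 h2)
    have hx₁ : x₁ ∈ Q₁' := hsg₁ (Function.mem_support.2 h3)
    have hx₂ : x₂ ∈ Q₂' := hsg₂ (Function.mem_support.2 h4)
    have hfacnn₂ : 0 ≤ ρ₂ y₂ w ^ α₂ / (ρ₂ x₂ w ^ α₂ * lam₂ w (ρ₂ x₂ w)) := by
      have hdρ : d₂ ≤ ρ₂ x₂ w := hd₂le w hwQ x₂ hx₂
      have hρpos : 0 < ρ₂ x₂ w := hd₂pos.trans_le hdρ
      have hLpos : 0 < lam₂ w (ρ₂ x₂ w) := hlam₂pos _ _ hρpos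
      apply div_nonneg (Real.rpow_nonneg (hρ₂0 _ _) _)
      exact (mul_pos (Real.rpow_pos_of_pos hρpos _) hLpos).le
    have hKb : ‖K (x₁, x₂) (y₁, y₂) - K (x₁, x₂) (y₁, w) - K (x₁, x₂) (z, y₂)
        + K (x₁, x₂) (z, w)‖ ≤ C_H * M₁ * M₂ := by
      calc ‖K (x₁, x₂) (y₁, y₂) - K (x₁, x₂) (y₁, w) - K (x₁, x₂) (z, y₂) + K (x₁, x₂) (z, w)‖
          ≤ C_H * (ρ₁ y₁ z ^ α₁ / (ρ₁ x₁ z ^ α₁ * lam₁ z (ρ₁ x₁ z)))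
              * (ρ₂ y₂ w ^ α₂ / (ρ₂ x₂ w ^ α₂ * lam₂ w (ρ₂ x₂ w))) :=
            hK x₁ x₂ y₁ y₂ z w (hcond₁ y₁ hy₁ x₁ hx₁) (hcond₂ y₂ hy₂ x₂ hx₂)
        _ ≤ C_H * M₁ * M₂ := by
            apply mul_le_mul
              (mul_le_mul_of_nonneg_left (hfac₁ y₁ hy₁ x₁ hx₁) hC_H)
              (hfac₂ y₂ hy₂ x₂ hx₂) hfacnn₂
            exact mul_nonneg hC_H hM₁nn
    calc ‖(K (x₁, x₂) (y₁, y₂) - K (x₁, x₂) (y₁, w) - K (x₁, x₂) (z, y₂) + K (x₁, x₂) (z, w))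
          * f₁ y₁ * f₂ y₂ * g₁ x₁ * g₂ x₂‖
        = ‖K (x₁, x₂) (y₁, y₂) - K (x₁, x₂) (y₁, w) - K (x₁, x₂) (z, y₂) + K (x₁, x₂) (z, w)‖
            * ((‖f₁ y₁‖ * ‖f₂ y₂‖) * (‖g₁ x₁‖ * ‖g₂ x₂‖)) := by
          simp only [norm_mul]; ring
      _ ≤ (C_H * M₁ * M₂) * ((‖f₁ y₁‖ * ‖f₂ y₂‖) * (‖g₁ x₁‖ * ‖g₂ x₂‖)) :=
          mul_le_mul_of_nonneg_right hKb (by positivity)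
  -- L¹ bounds
  obtain ⟨hIf₁, hL1f₁⟩ := l1_bound hQ₁m hμQ₁top hsf₁ hm_f₁ hn_f₁
  obtain ⟨hIg₁, hL1g₁⟩ := l1_bound hQ₁'m hμQ₁'top hsg₁ hm_g₁ hn_g₁
  obtain ⟨hIf₂, hL1f₂⟩ := l1_bound hQ₂m hμQ₂top hsf₂ hm_f₂ hn_f₂
  obtain ⟨hIg₂, hL1g₂⟩ := l1_bound hQ₂'m hμQ₂'top hsg₂ hm_g₂ hn_g₂
  have hIb := hintw w hwQ
  have hIc := hintz z hzQ
  have hId := hintzw z hzQ w hwQ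
  -- Fubini conversions
  have hFa : (∫ y₁, ∫ y₂, ∫ x₁, ∫ x₂,
        K (x₁, x₂) (y₁, y₂) * f₁ y₁ * f₂ y₂ * g₁ x₁ * g₂ x₂ ∂μ₂ ∂μ₁ ∂μ₂ ∂μ₁)
      = ∫ q, (K q.2 q.1 * f₁ q.1.1 * f₂ q.1.2 * g₁ q.2.1 * g₂ q.2.2)
          ∂((μ₁.prod μ₂).prod (μ₁.prod μ₂)) :=
    fubini4 μ₁ μ₂ μ₁ μ₂ _ hIa
  have hFb : (∫ y₁, ∫ y₂, ∫ x₁, ∫ x₂,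
        K (x₁, x₂) (y₁, w) * f₁ y₁ * f₂ y₂ * g₁ x₁ * g₂ x₂ ∂μ₂ ∂μ₁ ∂μ₂ ∂μ₁)
      = ∫ q, (K q.2 (q.1.1, w) * f₁ q.1.1 * f₂ q.1.2 * g₁ q.2.1 * g₂ q.2.2)
          ∂((μ₁.prod μ₂).prod (μ₁.prod μ₂)) :=
    fubini4 μ₁ μ₂ μ₁ μ₂ _ hIb
  have hFc : (∫ y₁, ∫ y₂, ∫ x₁, ∫ x₂,
        K (x₁, x₂) (z, y₂) * f₁ y₁ * f₂ y₂ * g₁ x₁ * g₂ x₂ ∂μ₂ ∂μ₁ ∂μ₂ ∂μ₁)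
      = ∫ q, (K q.2 (z, q.1.2) * f₁ q.1.1 * f₂ q.1.2 * g₁ q.2.1 * g₂ q.2.2)
          ∂((μ₁.prod μ₂).prod (μ₁.prod μ₂)) :=
    fubini4 μ₁ μ₂ μ₁ μ₂ _ hIc
  have hFd : (∫ y₁, ∫ y₂, ∫ x₁, ∫ x₂,
        K (x₁, x₂) (z, w) * f₁ y₁ * f₂ y₂ * g₁ x₁ * g₂ x₂ ∂μ₂ ∂μ₁ ∂μ₂ ∂μ₁)
      = ∫ q, (K q.2 (z, w) * f₁ q.1.1 * f₂ q.1.2 * g₁ q.2.1 * g₂ q.2.2)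
          ∂((μ₁.prod μ₂).prod (μ₁.prod μ₂)) :=
    fubini4 μ₁ μ₂ μ₁ μ₂ _ hId
  -- zero integrals via mean-zero
  have hZb : (∫ y₁, ∫ y₂, ∫ x₁, ∫ x₂,
      K (x₁, x₂) (y₁, w) * f₁ y₁ * f₂ y₂ * g₁ x₁ * g₂ x₂ ∂μ₂ ∂μ₁ ∂μ₂ ∂μ₁) = 0 := by
    have hre : ∀ (y₁ : X₁) (y₂ : X₂) (x₁ : X₁) (x₂ : X₂),
        K (x₁, x₂) (y₁, w) * f₁ y₁ * f₂ y₂ * g₁ x₁ * g₂ x₂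
          = f₂ y₂ • (K (x₁, x₂) (y₁, w) * f₁ y₁ * g₁ x₁ * g₂ x₂) := by
      intros; simp only [smul_eq_mul]; ring
    simp_rw [hre, integral_smul, integral_smul_const, hzero₂, zero_smul, integral_zero]
  have hZc : (∫ y₁, ∫ y₂, ∫ x₁, ∫ x₂,
      K (x₁, x₂) (z, y₂) * f₁ y₁ * f₂ y₂ * g₁ x₁ * g₂ x₂ ∂μ₂ ∂μ₁ ∂μ₂ ∂μ₁) = 0 := by
    have hre : ∀ (y₁ : X₁) (y₂ : X₂) (x₁ : X₁) (x₂ : X₂),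
        K (x₁, x₂) (z, y₂) * f₁ y₁ * f₂ y₂ * g₁ x₁ * g₂ x₂
          = f₁ y₁ • (K (x₁, x₂) (z, y₂) * f₂ y₂ * g₁ x₁ * g₂ x₂) := by
      intros; simp only [smul_eq_mul]; ring
    simp_rw [hre, integral_smul, integral_smul_const, hzero₁, zero_smul]
  have hZd : (∫ y₁, ∫ y₂, ∫ x₁, ∫ x₂,
      K (x₁, x₂) (z, w) * f₁ y₁ * f₂ y₂ * g₁ x₁ * g₂ x₂ ∂μ₂ ∂μ₁ ∂μ₂ ∂μ₁) = 0 := by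
    have hre : ∀ (y₁ : X₁) (y₂ : X₂) (x₁ : X₁) (x₂ : X₂),
        K (x₁, x₂) (z, w) * f₁ y₁ * f₂ y₂ * g₁ x₁ * g₂ x₂
          = f₂ y₂ • (K (x₁, x₂) (z, w) * f₁ y₁ * g₁ x₁ * g₂ x₂) := by
      intros; simp only [smul_eq_mul]; ring
    simp_rw [hre, integral_smul, integral_smul_const, hzero₂, zero_smul, integral_zero]
  have hPb0 : (∫ q, (K q.2 (q.1.1, w) * f₁ q.1.1 * f₂ q.1.2 * g₁ q.2.1 * g₂ q.2.2)
      ∂((μ₁.prod μ₂).prod (μ₁.prod μ₂))) = 0 := by rw [← hFb]; exact hZb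
  have hPc0 : (∫ q, (K q.2 (z, q.1.2) * f₁ q.1.1 * f₂ q.1.2 * g₁ q.2.1 * g₂ q.2.2)
      ∂((μ₁.prod μ₂).prod (μ₁.prod μ₂))) = 0 := by rw [← hFc]; exact hZc
  have hPd0 : (∫ q, (K q.2 (z, w) * f₁ q.1.1 * f₂ q.1.2 * g₁ q.2.1 * g₂ q.2.2)
      ∂((μ₁.prod μ₂).prod (μ₁.prod μ₂))) = 0 := by rw [← hFd]; exact hZd
  -- the difference integrand
  have hsplit : (∫ q, ((K q.2 q.1 - K q.2 (q.1.1, w) - K q.2 (z, q.1.2) + K q.2 (z, w))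
        * f₁ q.1.1 * f₂ q.1.2 * g₁ q.2.1 * g₂ q.2.2) ∂((μ₁.prod μ₂).prod (μ₁.prod μ₂)))
      = ∫ q, (K q.2 q.1 * f₁ q.1.1 * f₂ q.1.2 * g₁ q.2.1 * g₂ q.2.2)
          ∂((μ₁.prod μ₂).prod (μ₁.prod μ₂)) := by
    have hfun : (fun q : (X₁ × X₂) × (X₁ × X₂) =>
        (K q.2 q.1 - K q.2 (q.1.1, w) - K q.2 (z, q.1.2) + K q.2 (z, w))
          * f₁ q.1.1 * f₂ q.1.2 * g₁ q.2.1 * g₂ q.2.2)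
        = fun q : (X₁ × X₂) × (X₁ × X₂) =>
          ((K q.2 q.1 * f₁ q.1.1 * f₂ q.1.2 * g₁ q.2.1 * g₂ q.2.2)
            - (K q.2 (q.1.1, w) * f₁ q.1.1 * f₂ q.1.2 * g₁ q.2.1 * g₂ q.2.2))
          - ((K q.2 (z, q.1.2) * f₁ q.1.1 * f₂ q.1.2 * g₁ q.2.1 * g₂ q.2.2)
            - (K q.2 (z, w) * f₁ q.1.1 * f₂ q.1.2 * g₁ q.2.1 * g₂ q.2.2)) := by
      funext q; ring
    calc (∫ q, ((K q.2 q.1 - K q.2 (q.1.1, w) - K q.2 (z, q.1.2) + K q.2 (z, w))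
          * f₁ q.1.1 * f₂ q.1.2 * g₁ q.2.1 * g₂ q.2.2) ∂((μ₁.prod μ₂).prod (μ₁.prod μ₂)))
        = ∫ q, (((K q.2 q.1 * f₁ q.1.1 * f₂ q.1.2 * g₁ q.2.1 * g₂ q.2.2)
            - (K q.2 (q.1.1, w) * f₁ q.1.1 * f₂ q.1.2 * g₁ q.2.1 * g₂ q.2.2))
          - ((K q.2 (z, q.1.2) * f₁ q.1.1 * f₂ q.1.2 * g₁ q.2.1 * g₂ q.2.2)
            - (K q.2 (z, w) * f₁ q.1.1 * f₂ q.1.2 * g₁ q.2.1 * g₂ q.2.2)))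
            ∂((μ₁.prod μ₂).prod (μ₁.prod μ₂)) := by rw [hfun]
      _ = (∫ q, ((K q.2 q.1 * f₁ q.1.1 * f₂ q.1.2 * g₁ q.2.1 * g₂ q.2.2)
            - (K q.2 (q.1.1, w) * f₁ q.1.1 * f₂ q.1.2 * g₁ q.2.1 * g₂ q.2.2))
              ∂((μ₁.prod μ₂).prod (μ₁.prod μ₂)))
          - ∫ q, ((K q.2 (z, q.1.2) * f₁ q.1.1 * f₂ q.1.2 * g₁ q.2.1 * g₂ q.2.2)
            - (K q.2 (z, w) * f₁ q.1.1 * f₂ q.1.2 * g₁ q.2.1 * g₂ q.2.2))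
              ∂((μ₁.prod μ₂).prod (μ₁.prod μ₂)) := integral_sub (hIa.sub hIb) (hIc.sub hId)
      _ = ((∫ q, (K q.2 q.1 * f₁ q.1.1 * f₂ q.1.2 * g₁ q.2.1 * g₂ q.2.2)
              ∂((μ₁.prod μ₂).prod (μ₁.prod μ₂)))
          - (∫ q, (K q.2 (q.1.1, w) * f₁ q.1.1 * f₂ q.1.2 * g₁ q.2.1 * g₂ q.2.2)
              ∂((μ₁.prod μ₂).prod (μ₁.prod μ₂))))
          - ((∫ q, (K q.2 (z, q.1.2) * f₁ q.1.1 * f₂ q.1.2 * g₁ q.2.1 * g₂ q.2.2)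
              ∂((μ₁.prod μ₂).prod (μ₁.prod μ₂)))
          - (∫ q, (K q.2 (z, w) * f₁ q.1.1 * f₂ q.1.2 * g₁ q.2.1 * g₂ q.2.2)
              ∂((μ₁.prod μ₂).prod (μ₁.prod μ₂)))) := by
            rw [integral_sub hIa hIb, integral_sub hIc hId]
      _ = ∫ q, (K q.2 q.1 * f₁ q.1.1 * f₂ q.1.2 * g₁ q.2.1 * g₂ q.2.2)
              ∂((μ₁.prod μ₂).prod (μ₁.prod μ₂)) := by
            rw [hPb0, hPc0, hPd0]; ring
  -- norm bound
  rw [hFa, ← hsplit]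
  have hbnd_int : Integrable (fun q : (X₁ × X₂) × (X₁ × X₂) =>
      (C_H * M₁ * M₂) * ((‖f₁ q.1.1‖ * ‖f₂ q.1.2‖) * (‖g₁ q.2.1‖ * ‖g₂ q.2.2‖)))
      ((μ₁.prod μ₂).prod (μ₁.prod μ₂)) :=
    ((hIf₁.norm.mul_prod hIf₂.norm).mul_prod (hIg₁.norm.mul_prod hIg₂.norm)).const_mul _
  have hnorm_le : ‖∫ q, ((K q.2 q.1 - K q.2 (q.1.1, w) - K q.2 (z, q.1.2) + K q.2 (z, w))
        * f₁ q.1.1 * f₂ q.1.2 * g₁ q.2.1 * g₂ q.2.2) ∂((μ₁.prod μ₂).prod (μ₁.prod μ₂))‖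
      ≤ ∫ q, ((C_H * M₁ * M₂) * ((‖f₁ q.1.1‖ * ‖f₂ q.1.2‖) * (‖g₁ q.2.1‖ * ‖g₂ q.2.2‖)))
          ∂((μ₁.prod μ₂).prod (μ₁.prod μ₂)) :=
    norm_integral_le_of_norm_le hbnd_int
      (Filter.Eventually.of_forall fun q => hDbound q.1.1 q.1.2 q.2.1 q.2.2)
  refine le_trans hnorm_le ?_
  -- compute the bound integral
  have hsplit2 : (∫ q, ((C_H * M₁ * M₂) * ((‖f₁ q.1.1‖ * ‖f₂ q.1.2‖) * (‖g₁ q.2.1‖ * ‖g₂ q.2.2‖)))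
        ∂((μ₁.prod μ₂).prod (μ₁.prod μ₂)))
      = (C_H * M₁ * M₂) * (((∫ x, ‖f₁ x‖ ∂μ₁) * (∫ x, ‖f₂ x‖ ∂μ₂))
          * ((∫ x, ‖g₁ x‖ ∂μ₁) * (∫ x, ‖g₂ x‖ ∂μ₂))) := by
    have e0 : (∫ q, ((C_H * M₁ * M₂) * ((‖f₁ q.1.1‖ * ‖f₂ q.1.2‖) * (‖g₁ q.2.1‖ * ‖g₂ q.2.2‖)))
          ∂((μ₁.prod μ₂).prod (μ₁.prod μ₂)))
        = (C_H * M₁ * M₂) * ∫ q, ((‖f₁ q.1.1‖ * ‖f₂ q.1.2‖) * (‖g₁ q.2.1‖ * ‖g₂ q.2.2‖))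
            ∂((μ₁.prod μ₂).prod (μ₁.prod μ₂)) :=
      integral_const_mul _ _
    have e1 : (∫ q, ((‖f₁ q.1.1‖ * ‖f₂ q.1.2‖) * (‖g₁ q.2.1‖ * ‖g₂ q.2.2‖))
          ∂((μ₁.prod μ₂).prod (μ₁.prod μ₂)))
        = (∫ y, ‖f₁ y.1‖ * ‖f₂ y.2‖ ∂(μ₁.prod μ₂)) * (∫ x, ‖g₁ x.1‖ * ‖g₂ x.2‖ ∂(μ₁.prod μ₂)) :=
      integral_prod_mul (fun y : X₁ × X₂ => ‖f₁ y.1‖ * ‖f₂ y.2‖)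
        (fun x : X₁ × X₂ => ‖g₁ x.1‖ * ‖g₂ x.2‖)
    have e2 : (∫ y : X₁ × X₂, ‖f₁ y.1‖ * ‖f₂ y.2‖ ∂(μ₁.prod μ₂))
        = (∫ x, ‖f₁ x‖ ∂μ₁) * (∫ x, ‖f₂ x‖ ∂μ₂) :=
      integral_prod_mul (fun a => ‖f₁ a‖) (fun a => ‖f₂ a‖)
    have e3 : (∫ x : X₁ × X₂, ‖g₁ x.1‖ * ‖g₂ x.2‖ ∂(μ₁.prod μ₂))
        = (∫ x, ‖g₁ x‖ ∂μ₁) * (∫ x, ‖g₂ x‖ ∂μ₂) :=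
      integral_prod_mul (fun a => ‖g₁ a‖) (fun a => ‖g₂ a‖)
    rw [e0, e1, e2, e3]
  rw [hsplit2]
  -- final numeric estimate
  have hIf₁0 : 0 ≤ ∫ x, ‖f₁ x‖ ∂μ₁ := integral_nonneg fun _ => norm_nonneg _
  have hIf₂0 : 0 ≤ ∫ x, ‖f₂ x‖ ∂μ₂ := integral_nonneg fun _ => norm_nonneg _
  have hIg₁0 : 0 ≤ ∫ x, ‖g₁ x‖ ∂μ₁ := integral_nonneg fun _ => norm_nonneg _
  have hIg₂0 : 0 ≤ ∫ x, ‖g₂ x‖ ∂μ₂ := integral_nonneg fun _ => norm_nonneg _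
  have hm₁0 : 0 ≤ (μ₁ Q₁).toReal ^ ((1:ℝ)/2) := Real.rpow_nonneg ENNReal.toReal_nonneg _
  have hm₁'0 : 0 ≤ (μ₁ Q₁').toReal ^ ((1:ℝ)/2) := Real.rpow_nonneg ENNReal.toReal_nonneg _
  have hm₂0 : 0 ≤ (μ₂ Q₂).toReal ^ ((1:ℝ)/2) := Real.rpow_nonneg ENNReal.toReal_nonneg _
  have hm₂'0 : 0 ≤ (μ₂ Q₂').toReal ^ ((1:ℝ)/2) := Real.rpow_nonneg ENNReal.toReal_nonneg _
  have step1 : C_H * M₁ * M₂ * (((∫ x, ‖f₁ x‖ ∂μ₁) * (∫ x, ‖f₂ x‖ ∂μ₂))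
        * ((∫ x, ‖g₁ x‖ ∂μ₁) * (∫ x, ‖g₂ x‖ ∂μ₂)))
      ≤ C_H * M₁ * M₂ * (((μ₁ Q₁).toReal ^ ((1:ℝ)/2) * (μ₂ Q₂).toReal ^ ((1:ℝ)/2))
        * ((μ₁ Q₁').toReal ^ ((1:ℝ)/2) * (μ₂ Q₂').toReal ^ ((1:ℝ)/2))) := by
    apply mul_le_mul_of_nonneg_left _ (by positivity)
    apply mul_le_mul
    · exact mul_le_mul hL1f₁ hL1f₂ hIf₂0 hm₁0
    · exact mul_le_mul hL1g₁ hL1g₂ hIg₂0 hm₁'0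
    · exact mul_nonneg hIg₁0 hIg₂0
    · exact mul_nonneg hm₁0 hm₂0
  refine le_trans step1 ?_
  have step2 : C_H * M₁ * M₂ * (((μ₁ Q₁).toReal ^ ((1:ℝ)/2) * (μ₂ Q₂).toReal ^ ((1:ℝ)/2))
        * ((μ₁ Q₁').toReal ^ ((1:ℝ)/2) * (μ₂ Q₂').toReal ^ ((1:ℝ)/2)))
      ≤ (C_H + 1) * M₁ * M₂ * (((μ₁ Q₁).toReal ^ ((1:ℝ)/2) * (μ₂ Q₂).toReal ^ ((1:ℝ)/2))
        * ((μ₁ Q₁').toReal ^ ((1:ℝ)/2) * (μ₂ Q₂').toReal ^ ((1:ℝ)/2))) := by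
    have hrest : 0 ≤ M₁ * M₂ * (((μ₁ Q₁).toReal ^ ((1:ℝ)/2) * (μ₂ Q₂).toReal ^ ((1:ℝ)/2))
        * ((μ₁ Q₁').toReal ^ ((1:ℝ)/2) * (μ₂ Q₂').toReal ^ ((1:ℝ)/2))) := by positivity
    calc C_H * M₁ * M₂ * (((μ₁ Q₁).toReal ^ ((1:ℝ)/2) * (μ₂ Q₂).toReal ^ ((1:ℝ)/2))
          * ((μ₁ Q₁').toReal ^ ((1:ℝ)/2) * (μ₂ Q₂').toReal ^ ((1:ℝ)/2)))
        = C_H * (M₁ * M₂ * (((μ₁ Q₁).toReal ^ ((1:ℝ)/2) * (μ₂ Q₂).toReal ^ ((1:ℝ)/2))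
          * ((μ₁ Q₁').toReal ^ ((1:ℝ)/2) * (μ₂ Q₂').toReal ^ ((1:ℝ)/2)))) := by ring
      _ ≤ (C_H + 1) * (M₁ * M₂ * (((μ₁ Q₁).toReal ^ ((1:ℝ)/2) * (μ₂ Q₂).toReal ^ ((1:ℝ)/2))
          * ((μ₁ Q₁').toReal ^ ((1:ℝ)/2) * (μ₂ Q₂').toReal ^ ((1:ℝ)/2)))) :=
          mul_le_mul_of_nonneg_right (by linarith) hrest
      _ = (C_H + 1) * M₁ * M₂ * (((μ₁ Q₁).toReal ^ ((1:ℝ)/2) * (μ₂ Q₂).toReal ^ ((1:ℝ)/2))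
          * ((μ₁ Q₁').toReal ^ ((1:ℝ)/2) * (μ₂ Q₂').toReal ^ ((1:ℝ)/2))) := by ring
  refine le_trans step2 (le_of_eq ?_)
  rw [hM₁def, hM₂def]
  field_simp
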